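/- arXiv:1001.2051 — 2 statements merged into one kernel-verified Lean document; each statement's English description precedes it below -/
import Mathlib

section
/- Let G be a group, A → B a surjective homomorphism of commutative rings with kernel I satisfying I² = 0, and ρ: G → GL_d(B) a group homomorphism. Regard M_d(I) (d×d matrices with entries in I) as a G-module where g acts by m ↦ ρ(g)·m·ρ(g)⁻¹ (well-defined since I² = 0 makes I a B-module). Choose any set-theoretic lift ρ̃: G → M_d(A) with entrywise reduction equal to ρ (such values are automatically invertible). Then c(g₁, g₂) := ρ̃(g₁g₂)ρ̃(g₂)⁻¹ρ̃(g₁)⁻¹ − 1 takes values in M_d(I) and is a 2-cocycle; its class [c] ∈ H²(G, M_d(I)) depends only on ρ and not on the chosen lift ρ̃; and [c] = 0 if and only if there exists a group homomorphism G → GL_d(A) lifting ρ. In particular, if H²(G, M_d(I)) = 0 then every homomorphism ρ: G → GL_d(B) lifts to a homomorphism G → GL_d(A). -/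
/-!
STATEMENT 8: Let `G` be a group, `A → B` a surjective ring homomorphism with square-zero
kernel `I`, and `ρ : G → GL_d(B)` a homomorphism.  Any set-theoretic lift `ρ̃` of `ρ` to
matrices over `A` takes invertible values, the associated function
`c(g₁,g₂) = ρ̃(g₁g₂)ρ̃(g₂)⁻¹ρ̃(g₁)⁻¹ − 1` is a 2-cocycle valued in `M_d(I)` (for the
conjugation action, which is independent of the chosen lift), its class in
`H²(G, M_d(I))` is independent of the lift and vanishes if and only if `ρ` lifts to a
homomorphism `G → GL_d(A)`; in particular if `H²(G, M_d(I)) = 0` then every such `ρ`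
lifts.
-/

open Matrix

section MyHelpers

variable {d : ℕ} {A B : Type} [CommRing A] [CommRing B] {f : A →+* B}

lemma myKerMul (hI : (RingHom.ker f) ^ 2 = ⊥) {x y : A}
    (hx : x ∈ RingHom.ker f) (hy : y ∈ RingHom.ker f) : x * y = 0 := by
  have h : x * y ∈ (RingHom.ker f) ^ 2 := by
    rw [sq]; exact Ideal.mul_mem_mul hx hy
  rwa [hI, Ideal.mem_bot] at h

lemma myMatMul (hI : (RingHom.ker f) ^ 2 = ⊥) {m n : Matrix (Fin d) (Fin d) A}
    (hm : ∀ i j, m i j ∈ RingHom.ker f) (hn : ∀ i j, n i j ∈ RingHom.ker f) :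
    m * n = 0 := by
  ext i j
  rw [Matrix.mul_apply]
  exact Finset.sum_eq_zero fun k _ => myKerMul hI (hm i k) (hn k j)

lemma myMemL {m : Matrix (Fin d) (Fin d) A}
    (hm : ∀ i j, m i j ∈ RingHom.ker f) (x : Matrix (Fin d) (Fin d) A) :
    ∀ i j, (x * m) i j ∈ RingHom.ker f := fun i j => by
  rw [Matrix.mul_apply]
  exact Ideal.sum_mem _ fun k _ => Ideal.mul_mem_left _ _ (hm k j)

lemma myMemR {m : Matrix (Fin d) (Fin d) A}
    (hm : ∀ i j, m i j ∈ RingHom.ker f) (x : Matrix (Fin d) (Fin d) A) :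
    ∀ i j, (m * x) i j ∈ RingHom.ker f := fun i j => by
  rw [Matrix.mul_apply]
  exact Ideal.sum_mem _ fun k _ => Ideal.mul_mem_right _ _ (hm i k)

lemma myMemAdd {m n : Matrix (Fin d) (Fin d) A}
    (hm : ∀ i j, m i j ∈ RingHom.ker f) (hn : ∀ i j, n i j ∈ RingHom.ker f) :
    ∀ i j, (m + n) i j ∈ RingHom.ker f := fun i j => by
  rw [Matrix.add_apply]; exact add_mem (hm i j) (hn i j)

lemma myMemSub {m n : Matrix (Fin d) (Fin d) A}
    (hm : ∀ i j, m i j ∈ RingHom.ker f) (hn : ∀ i j, n i j ∈ RingHom.ker f) :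
    ∀ i j, (m - n) i j ∈ RingHom.ker f := fun i j => by
  rw [Matrix.sub_apply]; exact sub_mem (hm i j) (hn i j)

lemma myMemNeg {m : Matrix (Fin d) (Fin d) A}
    (hm : ∀ i j, m i j ∈ RingHom.ker f) :
    ∀ i j, (-m) i j ∈ RingHom.ker f := fun i j => by
  rw [Matrix.neg_apply]; exact neg_mem (hm i j)

lemma myUnitLift (hf : Function.Surjective f)
    (hI : (RingHom.ker f) ^ 2 = ⊥) {x : A} (h : IsUnit (f x)) : IsUnit x := by
  obtain ⟨u, hu⟩ := h
  obtain ⟨y, hy⟩ := hf (↑u⁻¹ : B)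
  have hxy : f (x * y) = 1 := by rw [_root_.map_mul, ← hu, hy, u.mul_inv]
  have hmem : 1 - x * y ∈ RingHom.ker f := by simp [RingHom.mem_ker, hxy]
  have h1 : x * (y * (1 + (1 - x * y))) = 1 := by
    have h0 : (1 - x * y) * (1 - x * y) = 0 := myKerMul hI hmem hmem
    linear_combination -h0
  exact IsUnit.of_mul_eq_one _ h1

/-- `(1+p)*(1+q) = 1 + (p+q)` when `p*q = 0`. -/
lemma myOneAdd {p q : Matrix (Fin d) (Fin d) A} (h : p * q = 0) :
    (1 + p) * (1 + q) = 1 + (p + q) := by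
  have h2 : (1 + p) * (1 + q) = 1 + (p + q) + p * q := by noncomm_ring
  rw [h2, h, add_zero]

end MyHelpers

section

variable (G : Type) [Group G] (d : ℕ) (A B : Type) [CommRing A] [CommRing B]

/-- The obstruction 2-cochain associated to a set-theoretic lift `ρt` of a
representation. -/
noncomputable def obstruction (ρt : G → Matrix (Fin d) (Fin d) A) :
    G → G → Matrix (Fin d) (Fin d) A :=
  fun g₁ g₂ => ρt (g₁ * g₂) * (ρt g₂)⁻¹ * (ρt g₁)⁻¹ - 1

theorem obstruction_theory_for_lifting_representations
    (f : A →+* B) (hf : Function.Surjective f)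
    (hI : (RingHom.ker f) ^ 2 = ⊥)
    (ρ : G → Matrix (Fin d) (Fin d) B)
    (hρ1 : ρ 1 = 1) (hρmul : ∀ g h, ρ (g * h) = ρ g * ρ h)
    (hρunit : ∀ g, IsUnit (ρ g))
    (ρt : G → Matrix (Fin d) (Fin d) A)
    (hρt : ∀ g, (ρt g).map f = ρ g) :
    -- (a) the values of any set-theoretic lift are automatically invertible:
    (∀ g, IsUnit (ρt g)) ∧
    -- (b) the obstruction cochain takes values in `M_d(I)` and is a 2-cocycle
    -- (for the conjugation action `m ↦ ρ̃(g) m ρ̃(g)⁻¹`):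
    (∀ g₁ g₂ i j, obstruction G d A ρt g₁ g₂ i j ∈ RingHom.ker f) ∧
    (∀ g₁ g₂ g₃,
      ρt g₁ * obstruction G d A ρt g₂ g₃ * (ρt g₁)⁻¹
        - obstruction G d A ρt (g₁ * g₂) g₃
        + obstruction G d A ρt g₁ (g₂ * g₃)
        - obstruction G d A ρt g₁ g₂ = 0) ∧
    -- the conjugation action on matrices with entries in `I` does not depend on the
    -- choice of lift (this is the `B`-module structure on `I` given by `I² = 0`):
    (∀ ρt' : G → Matrix (Fin d) (Fin d) A, (∀ g, (ρt' g).map f = ρ g) →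
      ∀ (g : G) (m : Matrix (Fin d) (Fin d) A), (∀ i j, m i j ∈ RingHom.ker f) →
        ρt g * m * (ρt g)⁻¹ = ρt' g * m * (ρt' g)⁻¹) ∧
    -- (c) the cohomology class of the obstruction cocycle does not depend on the lift:
    (∀ ρt' : G → Matrix (Fin d) (Fin d) A, (∀ g, (ρt' g).map f = ρ g) →
      ∃ b : G → Matrix (Fin d) (Fin d) A, (∀ g i j, b g i j ∈ RingHom.ker f) ∧
        ∀ g₁ g₂, obstruction G d A ρt' g₁ g₂ =
          obstruction G d A ρt g₁ g₂
            + (ρt g₁ * b g₂ * (ρt g₁)⁻¹ - b (g₁ * g₂) + b g₁)) ∧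
    -- (d) the class vanishes iff `ρ` lifts to a homomorphism `G → GL_d(A)`:
    ((∃ b : G → Matrix (Fin d) (Fin d) A, (∀ g i j, b g i j ∈ RingHom.ker f) ∧
        ∀ g₁ g₂, obstruction G d A ρt g₁ g₂ =
          ρt g₁ * b g₂ * (ρt g₁)⁻¹ - b (g₁ * g₂) + b g₁) ↔
      (∃ ρA : G → Matrix (Fin d) (Fin d) A, ρA 1 = 1 ∧
        (∀ g h, ρA (g * h) = ρA g * ρA h) ∧ (∀ g, IsUnit (ρA g)) ∧
        ∀ g, (ρA g).map f = ρ g)) ∧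
    -- (e) in particular, if `H²(G, M_d(I)) = 0` then every homomorphism lifts:
    ((∀ z : G → G → Matrix (Fin d) (Fin d) A,
        (∀ g₁ g₂ i j, z g₁ g₂ i j ∈ RingHom.ker f) →
        (∀ g₁ g₂ g₃, ρt g₁ * z g₂ g₃ * (ρt g₁)⁻¹ - z (g₁ * g₂) g₃
          + z g₁ (g₂ * g₃) - z g₁ g₂ = 0) →
        ∃ b : G → Matrix (Fin d) (Fin d) A, (∀ g i j, b g i j ∈ RingHom.ker f) ∧
          ∀ g₁ g₂, z g₁ g₂ = ρt g₁ * b g₂ * (ρt g₁)⁻¹ - b (g₁ * g₂) + b g₁) →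
      ∃ ρA : G → Matrix (Fin d) (Fin d) A, ρA 1 = 1 ∧
        (∀ g h, ρA (g * h) = ρA g * ρA h) ∧ (∀ g, IsUnit (ρA g)) ∧
        ∀ g, (ρA g).map f = ρ g) := by
  classical
  -- map of a difference of matrices
  have hms : ∀ M N : Matrix (Fin d) (Fin d) A, (M - N).map f = M.map f - N.map f := by
    intro M N; ext i j
    simp [Matrix.map_apply, Matrix.sub_apply]
  have hma : ∀ M N : Matrix (Fin d) (Fin d) A, (M + N).map f = M.map f + N.map f := by
    intro M N; ext i j
    simp [Matrix.map_apply, Matrix.add_apply]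
  -- determinants of lifts are units
  have hdet : ∀ σ : G → Matrix (Fin d) (Fin d) A, (∀ g, (σ g).map f = ρ g) →
      ∀ g, IsUnit (σ g).det := by
    intro σ hσ g
    apply myUnitLift hf hI
    rw [RingHom.map_det, RingHom.mapMatrix_apply, hσ]
    exact (Matrix.isUnit_iff_isUnit_det _).mp (hρunit g)
  -- cancellation of a unit on the right
  have hcancel : ∀ (u X Y : Matrix (Fin d) (Fin d) A), IsUnit u.det →
      X * u = Y * u → X = Y := by
    intro u X Y hu h
    have h2 := congrArg (· * u⁻¹) h
    simpa only [mul_assoc, Matrix.mul_nonsing_inv u hu, mul_one] using h2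
  -- the image of the inverse is a two-sided inverse of ρ g
  have hinvl : ∀ σ : G → Matrix (Fin d) (Fin d) A, (∀ g, (σ g).map f = ρ g) →
      ∀ g : G, ((σ g)⁻¹).map f * ρ g = 1 := by
    intro σ hσ g
    have h1 := congrArg (fun M : Matrix (Fin d) (Fin d) A => M.map f)
      (Matrix.nonsing_inv_mul (σ g) (hdet σ hσ g))
    simpa [Matrix.map_mul, hσ g, Matrix.map_one _ (map_zero f) (map_one f)] using h1
  have hinvr : ∀ σ : G → Matrix (Fin d) (Fin d) A, (∀ g, (σ g).map f = ρ g) →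
      ∀ g : G, ρ g * ((σ g)⁻¹).map f = 1 := by
    intro σ hσ g
    have h1 := congrArg (fun M : Matrix (Fin d) (Fin d) A => M.map f)
      (Matrix.mul_nonsing_inv (σ g) (hdet σ hσ g))
    simpa [Matrix.map_mul, hσ g, Matrix.map_one _ (map_zero f) (map_one f)] using h1
  -- the obstruction has entries in the kernel
  have hker : ∀ σ : G → Matrix (Fin d) (Fin d) A, (∀ g, (σ g).map f = ρ g) →
      ∀ g₁ g₂ i j, obstruction G d A σ g₁ g₂ i j ∈ RingHom.ker f := by
    intro σ hσ g₁ g₂ i j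
    have hmap : (obstruction G d A σ g₁ g₂).map f = 0 := by
      show (σ (g₁ * g₂) * (σ g₂)⁻¹ * (σ g₁)⁻¹ - 1).map f = 0
      rw [hms, Matrix.map_mul, Matrix.map_mul, hσ, hρmul,
        Matrix.map_one _ (map_zero f) (map_one f),
        mul_assoc (ρ g₁), hinvr σ hσ g₂, mul_one, hinvr σ hσ g₁, sub_self]
    have h2 := congrFun (congrFun hmap i) j
    simpa [Matrix.map_apply, RingHom.mem_ker] using h2
  -- the key multiplicative identity
  have hkey : ∀ σ : G → Matrix (Fin d) (Fin d) A, (∀ g, (σ g).map f = ρ g) →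
      ∀ g₁ g₂ : G, σ (g₁ * g₂) = (1 + obstruction G d A σ g₁ g₂) * σ g₁ * σ g₂ := by
    intro σ hσ g₁ g₂
    show σ (g₁ * g₂) = (1 + (σ (g₁ * g₂) * (σ g₂)⁻¹ * (σ g₁)⁻¹ - 1)) * σ g₁ * σ g₂
    have h0 : (1 : Matrix (Fin d) (Fin d) A) + (σ (g₁ * g₂) * (σ g₂)⁻¹ * (σ g₁)⁻¹ - 1)
        = σ (g₁ * g₂) * (σ g₂)⁻¹ * (σ g₁)⁻¹ := by abel
    rw [h0, mul_assoc (σ (g₁ * g₂) * (σ g₂)⁻¹) ((σ g₁)⁻¹) (σ g₁),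
      Matrix.nonsing_inv_mul (σ g₁) (hdet σ hσ g₁), mul_one,
      mul_assoc (σ (g₁ * g₂)) ((σ g₂)⁻¹) (σ g₂),
      Matrix.nonsing_inv_mul (σ g₂) (hdet σ hσ g₂), mul_one]
  -- conversely, the obstruction is determined by such an identity
  have hobs : ∀ σ : G → Matrix (Fin d) (Fin d) A, (∀ g, (σ g).map f = ρ g) →
      ∀ (g₁ g₂ : G) (m : Matrix (Fin d) (Fin d) A),
        σ (g₁ * g₂) = (1 + m) * σ g₁ * σ g₂ → obstruction G d A σ g₁ g₂ = m := by
    intro σ hσ g₁ g₂ m hm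
    have h := (hkey σ hσ g₁ g₂).symm.trans hm
    have h2 := hcancel _ _ _ (hdet σ hσ g₂) h
    have h3 := hcancel _ _ _ (hdet σ hσ g₁) h2
    exact add_left_cancel h3
  -- conjugation identity
  have hconj : ∀ g : G, ∀ m : Matrix (Fin d) (Fin d) A,
      ρt g * (1 + m) = (1 + ρt g * m * (ρt g)⁻¹) * ρt g := by
    intro g m
    have h1 : ρt g * m * (ρt g)⁻¹ * ρt g = ρt g * m := by
      rw [mul_assoc (ρt g * m), Matrix.nonsing_inv_mul _ (hdet ρt hρt g), mul_one]
    rw [mul_add, mul_one, add_mul, one_mul, h1]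
  -- (a)
  have parta : ∀ g, IsUnit (ρt g) :=
    fun g => (Matrix.isUnit_iff_isUnit_det _).mpr (hdet ρt hρt g)
  have partb1 := hker ρt hρt
  -- (b) cocycle identity
  have partb2 : ∀ g₁ g₂ g₃,
      ρt g₁ * obstruction G d A ρt g₂ g₃ * (ρt g₁)⁻¹
        - obstruction G d A ρt (g₁ * g₂) g₃
        + obstruction G d A ρt g₁ (g₂ * g₃)
        - obstruction G d A ρt g₁ g₂ = 0 := by
    intro g₁ g₂ g₃
    set a := obstruction G d A ρt (g₁ * g₂) g₃ with ha
    set b := obstruction G d A ρt g₁ g₂ with hb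
    set e := obstruction G d A ρt g₁ (g₂ * g₃) with he
    set w := obstruction G d A ρt g₂ g₃ with hw
    have e1 : ρt (g₁ * g₂ * g₃) = (1 + a) * ((1 + b) * ρt g₁ * ρt g₂) * ρt g₃ := by
      rw [hkey ρt hρt (g₁ * g₂) g₃, hkey ρt hρt g₁ g₂]
    have e2 : ρt (g₁ * g₂ * g₃) = (1 + e) * ρt g₁ * ((1 + w) * ρt g₂ * ρt g₃) := by
      rw [mul_assoc g₁ g₂ g₃, hkey ρt hρt g₁ (g₂ * g₃), hkey ρt hρt g₂ g₃]
    have e3 := e1.symm.trans e2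
    simp only [← mul_assoc] at e3
    have e4 := hcancel _ _ _ (hdet ρt hρt g₃) e3
    have e5 := hcancel _ _ _ (hdet ρt hρt g₂) e4
    -- e5 : (1 + a) * (1 + b) * ρt g₁ = (1 + e) * ρt g₁ * (1 + w)
    have z1 : a * b = 0 := myMatMul hI (hker ρt hρt _ _) (hker ρt hρt _ _)
    have z2 : e * ρt g₁ * w = 0 :=
      myMatMul hI (myMemR (hker ρt hρt _ _) (ρt g₁)) (hker ρt hρt _ _)
    have star : a * ρt g₁ + b * ρt g₁ = e * ρt g₁ + ρt g₁ * w := by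
      calc a * ρt g₁ + b * ρt g₁
          = (1 + a) * (1 + b) * ρt g₁ - ρt g₁ - a * b * ρt g₁ := by noncomm_ring
        _ = (1 + e) * ρt g₁ * (1 + w) - ρt g₁ - a * b * ρt g₁ := by rw [e5]
        _ = e * ρt g₁ + ρt g₁ * w + e * ρt g₁ * w - a * b * ρt g₁ := by noncomm_ring
        _ = e * ρt g₁ + ρt g₁ * w := by rw [z1, z2]; noncomm_ring
    have star2 := congrArg (· * (ρt g₁)⁻¹) star
    simp only [add_mul, mul_assoc, Matrix.mul_nonsing_inv (ρt g₁) (hdet ρt hρt g₁),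
      mul_one] at star2
    -- star2 : a + b = e + ρt g₁ * (w * (ρt g₁)⁻¹)
    have hgoal : ρt g₁ * (w * (ρt g₁)⁻¹) = a + b - e := by rw [star2]; abel
    calc ρt g₁ * w * (ρt g₁)⁻¹ - a + e - b
        = ρt g₁ * (w * (ρt g₁)⁻¹) - a + e - b := by rw [mul_assoc]
      _ = (a + b - e) - a + e - b := by rw [hgoal]
      _ = 0 := by abel
  -- inverse maps agree
  have hinveq : ∀ σ σ' : G → Matrix (Fin d) (Fin d) A,
      (∀ g, (σ g).map f = ρ g) → (∀ g, (σ' g).map f = ρ g) →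
      ∀ g, ((σ g)⁻¹).map f = ((σ' g)⁻¹).map f := by
    intro σ σ' hσ hσ' g
    exact left_inv_eq_right_inv (hinvl σ hσ g) (hinvr σ' hσ' g)
  -- conjugation action does not depend on the lift
  have partconj : ∀ ρt' : G → Matrix (Fin d) (Fin d) A, (∀ g, (ρt' g).map f = ρ g) →
      ∀ (g : G) (m : Matrix (Fin d) (Fin d) A), (∀ i j, m i j ∈ RingHom.ker f) →
        ρt g * m * (ρt g)⁻¹ = ρt' g * m * (ρt' g)⁻¹ := by
    intro ρt' hρt' g m hm
    have he : ∀ i j, (ρt g - ρt' g) i j ∈ RingHom.ker f := by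
      intro i j
      have h1 := congrFun (congrFun (hρt g) i) j
      have h2 := congrFun (congrFun (hρt' g) i) j
      simp only [Matrix.map_apply] at h1 h2
      rw [RingHom.mem_ker, Matrix.sub_apply, map_sub, h1, h2, sub_self]
    have hδ : ∀ i j, ((ρt g)⁻¹ - (ρt' g)⁻¹) i j ∈ RingHom.ker f := by
      intro i j
      have h0 := congrFun (congrFun (hinveq ρt ρt' hρt hρt' g) i) j
      simp only [Matrix.map_apply] at h0
      rw [RingHom.mem_ker, Matrix.sub_apply, map_sub, h0, sub_self]
    have t1 : (ρt g - ρt' g) * m = 0 := myMatMul hI he hm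
    have t2 : ρt' g * m * ((ρt g)⁻¹ - (ρt' g)⁻¹) = 0 :=
      myMatMul hI (myMemL hm (ρt' g)) hδ
    have main : ρt g * m * (ρt g)⁻¹ - ρt' g * m * (ρt' g)⁻¹
        = (ρt g - ρt' g) * m * (ρt g)⁻¹ + ρt' g * m * ((ρt g)⁻¹ - (ρt' g)⁻¹) := by
      noncomm_ring
    rw [t1, t2, zero_mul, zero_add] at main
    exact sub_eq_zero.mp main
  -- (c) independence of the class
  have partc : ∀ ρt' : G → Matrix (Fin d) (Fin d) A, (∀ g, (ρt' g).map f = ρ g) →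
      ∃ b : G → Matrix (Fin d) (Fin d) A, (∀ g i j, b g i j ∈ RingHom.ker f) ∧
        ∀ g₁ g₂, obstruction G d A ρt' g₁ g₂ =
          obstruction G d A ρt g₁ g₂
            + (ρt g₁ * b g₂ * (ρt g₁)⁻¹ - b (g₁ * g₂) + b g₁) := by
    intro ρt' hρt'
    set bb : G → Matrix (Fin d) (Fin d) A := fun g => 1 - ρt' g * (ρt g)⁻¹ with hbbdef
    have hbker : ∀ g i j, bb g i j ∈ RingHom.ker f := by
      intro g i j
      have hmap : (bb g).map f = 0 := by
        show ((1 : Matrix (Fin d) (Fin d) A) - ρt' g * (ρt g)⁻¹).map f = 0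
        rw [hms, Matrix.map_mul, hρt' g, hinvr ρt hρt g,
          Matrix.map_one _ (map_zero f) (map_one f), sub_self]
      have h2 := congrFun (congrFun hmap i) j
      simpa [Matrix.map_apply, RingHom.mem_ker] using h2
    have hbl : ∀ g, ρt' g = (1 + -(bb g)) * ρt g := by
      intro g
      have h0 : (1 : Matrix (Fin d) (Fin d) A) + -(bb g) = ρt' g * (ρt g)⁻¹ := by
        show (1 : Matrix (Fin d) (Fin d) A) + -(1 - ρt' g * (ρt g)⁻¹) = ρt' g * (ρt g)⁻¹
        abel
      rw [h0, mul_assoc, Matrix.nonsing_inv_mul _ (hdet ρt hρt g), mul_one]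
    refine ⟨bb, hbker, ?_⟩
    intro g₁ g₂
    set m : Matrix (Fin d) (Fin d) A :=
      obstruction G d A ρt g₁ g₂
        + (ρt g₁ * bb g₂ * (ρt g₁)⁻¹ - bb (g₁ * g₂) + bb g₁) with hmdef
    have hmmem : ∀ i j, m i j ∈ RingHom.ker f :=
      myMemAdd (partb1 g₁ g₂)
        (myMemAdd (myMemSub (myMemR (myMemL (hbker g₂) (ρt g₁)) ((ρt g₁)⁻¹))
          (hbker (g₁ * g₂))) (hbker g₁))
    apply hobs ρt' hρt' g₁ g₂ m
    -- goal : ρt' (g₁ * g₂) = (1 + m) * ρt' g₁ * ρt' g₂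
    rw [hbl (g₁ * g₂), hbl g₁, hbl g₂, hkey ρt hρt g₁ g₂]
    -- LHS = (1 + -(bb (g₁g₂))) * ((1 + c) * ρt g₁ * ρt g₂)
    -- RHS = (1 + m) * ((1 + -(bb g₁)) * ρt g₁) * ((1 + -(bb g₂)) * ρt g₂)
    have znc : -(bb (g₁ * g₂)) * obstruction G d A ρt g₁ g₂ = 0 :=
      myMatMul hI (myMemNeg (hbker (g₁ * g₂))) (partb1 g₁ g₂)
    have zmb : m * -(bb g₁) = 0 := myMatMul hI hmmem (myMemNeg (hbker g₁))
    have zmw : (m + -(bb g₁)) * (ρt g₁ * -(bb g₂) * (ρt g₁)⁻¹) = 0 :=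
      myMatMul hI (myMemAdd hmmem (myMemNeg (hbker g₁)))
        (myMemR (myMemL (myMemNeg (hbker g₂)) (ρt g₁)) ((ρt g₁)⁻¹))
    calc (1 + -(bb (g₁ * g₂))) * ((1 + obstruction G d A ρt g₁ g₂) * ρt g₁ * ρt g₂)
        = ((1 + -(bb (g₁ * g₂))) * (1 + obstruction G d A ρt g₁ g₂)) * ρt g₁ * ρt g₂ := by
          simp only [mul_assoc]
      _ = (1 + (-(bb (g₁ * g₂)) + obstruction G d A ρt g₁ g₂)) * ρt g₁ * ρt g₂ := by
          rw [myOneAdd znc]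
      _ = (1 + ((m + -(bb g₁)) + ρt g₁ * -(bb g₂) * (ρt g₁)⁻¹)) * ρt g₁ * ρt g₂ := by
          have : -(bb (g₁ * g₂)) + obstruction G d A ρt g₁ g₂
              = (m + -(bb g₁)) + ρt g₁ * -(bb g₂) * (ρt g₁)⁻¹ := by
            have hneg : ρt g₁ * -(bb g₂) * (ρt g₁)⁻¹
                = -(ρt g₁ * bb g₂ * (ρt g₁)⁻¹) := by noncomm_ring
            rw [hneg, hmdef]; abel
          rw [this]
      _ = ((1 + (m + -(bb g₁))) * (1 + ρt g₁ * -(bb g₂) * (ρt g₁)⁻¹)) * ρt g₁ * ρt g₂ := by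
          rw [myOneAdd zmw]
      _ = ((1 + m) * (1 + -(bb g₁))) * ((1 + ρt g₁ * -(bb g₂) * (ρt g₁)⁻¹) * ρt g₁) * ρt g₂ := by
          rw [myOneAdd zmb]; simp only [mul_assoc]
      _ = ((1 + m) * (1 + -(bb g₁))) * (ρt g₁ * (1 + -(bb g₂))) * ρt g₂ := by
          rw [hconj g₁ (-(bb g₂))]
      _ = (1 + m) * ((1 + -(bb g₁)) * ρt g₁) * ((1 + -(bb g₂)) * ρt g₂) := by
          simp only [mul_assoc]
  -- (d)
  have partd : (∃ b : G → Matrix (Fin d) (Fin d) A,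
        (∀ g i j, b g i j ∈ RingHom.ker f) ∧
        ∀ g₁ g₂, obstruction G d A ρt g₁ g₂ =
          ρt g₁ * b g₂ * (ρt g₁)⁻¹ - b (g₁ * g₂) + b g₁) ↔
      (∃ ρA : G → Matrix (Fin d) (Fin d) A, ρA 1 = 1 ∧
        (∀ g h, ρA (g * h) = ρA g * ρA h) ∧ (∀ g, IsUnit (ρA g)) ∧
        ∀ g, (ρA g).map f = ρ g) := by
    constructor
    · rintro ⟨b, hbk, hbeq⟩
      set ρA : G → Matrix (Fin d) (Fin d) A := fun g => (1 + b g) * ρt g with hρA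
      have hbzero : ∀ g, (b g).map f = 0 := by
        intro g; ext i j
        rw [Matrix.map_apply, Matrix.zero_apply]
        exact hbk g i j
      have hAmap : ∀ g, (ρA g).map f = ρ g := by
        intro g
        show ((1 + b g) * ρt g).map f = ρ g
        rw [Matrix.map_mul, hma, hbzero g, Matrix.map_one _ (map_zero f) (map_one f),
          add_zero, one_mul, hρt]
      have hAmul : ∀ g₁ g₂, ρA (g₁ * g₂) = ρA g₁ * ρA g₂ := by
        intro g₁ g₂
        show (1 + b (g₁ * g₂)) * ρt (g₁ * g₂) = ((1 + b g₁) * ρt g₁) * ((1 + b g₂) * ρt g₂)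
        have zbc : b (g₁ * g₂) * obstruction G d A ρt g₁ g₂ = 0 :=
          myMatMul hI (hbk (g₁ * g₂)) (partb1 g₁ g₂)
        have zbw : b g₁ * (ρt g₁ * b g₂ * (ρt g₁)⁻¹) = 0 :=
          myMatMul hI (hbk g₁) (myMemR (myMemL (hbk g₂) (ρt g₁)) ((ρt g₁)⁻¹))
        calc (1 + b (g₁ * g₂)) * ρt (g₁ * g₂)
            = ((1 + b (g₁ * g₂)) * (1 + obstruction G d A ρt g₁ g₂)) * ρt g₁ * ρt g₂ := by
              rw [hkey ρt hρt g₁ g₂]; simp only [mul_assoc]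
          _ = (1 + (b (g₁ * g₂) + obstruction G d A ρt g₁ g₂)) * ρt g₁ * ρt g₂ := by
              rw [myOneAdd zbc]
          _ = (1 + (b g₁ + ρt g₁ * b g₂ * (ρt g₁)⁻¹)) * ρt g₁ * ρt g₂ := by
              have : b (g₁ * g₂) + obstruction G d A ρt g₁ g₂
                  = b g₁ + ρt g₁ * b g₂ * (ρt g₁)⁻¹ := by
                rw [hbeq g₁ g₂]; abel
              rw [this]
          _ = ((1 + b g₁) * (1 + ρt g₁ * b g₂ * (ρt g₁)⁻¹)) * ρt g₁ * ρt g₂ := by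
              rw [myOneAdd zbw]
          _ = (1 + b g₁) * ((1 + ρt g₁ * b g₂ * (ρt g₁)⁻¹) * ρt g₁) * ρt g₂ := by
              simp only [mul_assoc]
          _ = (1 + b g₁) * (ρt g₁ * (1 + b g₂)) * ρt g₂ := by
              rw [hconj g₁ (b g₂)]
          _ = ((1 + b g₁) * ρt g₁) * ((1 + b g₂) * ρt g₂) := by
              simp only [mul_assoc]
      have hAunit : ∀ g, IsUnit (ρA g) :=
        fun g => (Matrix.isUnit_iff_isUnit_det _).mpr (hdet ρA hAmap g)
      have hA1 : ρA 1 = 1 := by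
        have h := hAmul 1 1
        rw [one_mul] at h
        have h2 : ρA 1 * 1 = ρA 1 * ρA 1 := by rw [mul_one]; exact h
        exact ((hAunit 1).mul_left_cancel h2).symm
      exact ⟨ρA, hA1, hAmul, hAunit, hAmap⟩
    · rintro ⟨ρA, hA1, hAmul, hAunit, hAmap⟩
      have hzero : ∀ g₁ g₂, obstruction G d A ρA g₁ g₂ = 0 := by
        intro g₁ g₂
        apply hobs ρA hAmap g₁ g₂ 0
        rw [add_zero, one_mul, hAmul]
      obtain ⟨b, hbk, hbeq⟩ := partc ρA hAmap
      refine ⟨fun g => -(b g), fun g i j => ?_, ?_⟩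
      · exact myMemNeg (hbk g) i j
      · intro g₁ g₂
        show obstruction G d A ρt g₁ g₂
          = ρt g₁ * (-(b g₂)) * (ρt g₁)⁻¹ - (-(b (g₁ * g₂))) + (-(b g₁))
        have h := hbeq g₁ g₂
        rw [hzero g₁ g₂] at h
        -- h : 0 = c + (w - b₁₂ + b₁)
        have h2 : obstruction G d A ρt g₁ g₂
            = -(ρt g₁ * b g₂ * (ρt g₁)⁻¹ - b (g₁ * g₂) + b g₁) :=
          eq_neg_of_add_eq_zero_left h.symm
        have hneg : ρt g₁ * (-(b g₂)) * (ρt g₁)⁻¹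
            = -(ρt g₁ * b g₂ * (ρt g₁)⁻¹) := by noncomm_ring
        rw [h2, hneg]
        abel
  -- (e)
  have parte : (∀ z : G → G → Matrix (Fin d) (Fin d) A,
        (∀ g₁ g₂ i j, z g₁ g₂ i j ∈ RingHom.ker f) →
        (∀ g₁ g₂ g₃, ρt g₁ * z g₂ g₃ * (ρt g₁)⁻¹ - z (g₁ * g₂) g₃
          + z g₁ (g₂ * g₃) - z g₁ g₂ = 0) →
        ∃ b : G → Matrix (Fin d) (Fin d) A, (∀ g i j, b g i j ∈ RingHom.ker f) ∧
          ∀ g₁ g₂, z g₁ g₂ = ρt g₁ * b g₂ * (ρt g₁)⁻¹ - b (g₁ * g₂) + b g₁) →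
      ∃ ρA : G → Matrix (Fin d) (Fin d) A, ρA 1 = 1 ∧
        (∀ g h, ρA (g * h) = ρA g * ρA h) ∧ (∀ g, IsUnit (ρA g)) ∧
        ∀ g, (ρA g).map f = ρ g := by
    intro H
    obtain ⟨b, hbk, hbeq⟩ := H (obstruction G d A ρt) partb1 partb2
    exact partd.mp ⟨b, hbk, hbeq⟩
  exact ⟨parta, partb1, partb2, partconj, partc, partd, parte⟩

end
end

section
/- Let p be a prime and E a finite field extension of ℚ_p. The E-vector space of continuous group homomorphisms from the multiplicative group ℚ_p^× to the additive group (E, +) has dimension exactly 2. -/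
/-!
STATEMENT 13: Let `p` be a prime and `E` a finite field extension of `ℚ_p`.  The
`E`-vector space of continuous group homomorphisms from the multiplicative group `ℚ_p^×`
to the additive group `(E, +)` has dimension exactly `2`.
-/

set_option linter.unusedSectionVars false

open Filter Topology

namespace Stmt13

variable {p : ℕ} [Fact p.Prime]

/-- `pw m = p ^ (-m)` as a real number. -/
noncomputable def pw (p m : ℕ) : ℝ := (p:ℝ) ^ (-(m:ℤ))

lemma hp1 : (1:ℝ) < p := by exact_mod_cast (Fact.out : p.Prime).one_lt

lemma hp0 : (0:ℝ) < p := lt_trans one_pos (hp1 (p := p))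

lemma pw_pos (m : ℕ) : 0 < pw p m := zpow_pos hp0 _

lemma pw_le_pw {m n : ℕ} (h : m ≤ n) : pw p n ≤ pw p m :=
  zpow_le_zpow_right₀ hp1.le (by omega)

lemma pw_lt_pw {m n : ℕ} (h : m < n) : pw p n < pw p m :=
  zpow_lt_zpow_right₀ hp1 (by omega)

lemma pw_lt_one {m : ℕ} (h : 1 ≤ m) : pw p m < 1 := by
  have h0 : pw p 0 = 1 := by norm_num [pw]
  rw [← h0]; exact pw_lt_pw (by omega)

lemma pw_mul (m n : ℕ) : pw p m * pw p n = pw p (m + n) := by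
  rw [pw, pw, pw, ← zpow_add₀ (ne_of_gt hp0)]
  push_cast; ring

lemma pw_zero : pw p 0 = 1 := by norm_num [pw]

lemma norm_p_pow (n : ℕ) : ‖((p:ℚ_[p]))^n‖ = pw p n := by
  rw [norm_pow, Padic.norm_p, pw, ← zpow_natCast, inv_zpow']

/-- Binomial estimate: `(1+x)^a = 1 + a x + x² c` with `‖c‖ ≤ 1`. -/
lemma one_add_pow (a : ℕ) {x : ℚ_[p]} (hx : ‖x‖ ≤ 1) :
    ∃ c : ℚ_[p], ‖c‖ ≤ 1 ∧ (1 + x)^a = 1 + a * x + x^2 * c := by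
  induction a with
  | zero => exact ⟨0, by norm_num⟩
  | succ a ih =>
    obtain ⟨c, hc, hcalc⟩ := ih
    refine ⟨c + a + c * x, ?_, ?_⟩
    · refine le_trans (Padic.nonarchimedean _ _) (max_le (le_trans (Padic.nonarchimedean _ _) (max_le hc ?_)) ?_)
      · have : ((a:ℚ_[p])) = ((a:ℤ) : ℚ_[p]) := by push_cast; ring
        rw [this]; exact Padic.norm_int_le_one _
      · calc ‖c * x‖ = ‖c‖ * ‖x‖ := norm_mul _ _
          _ ≤ 1 * 1 := mul_le_mul hc hx (norm_nonneg _) zero_le_one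
          _ = 1 := one_mul 1
    · rw [pow_succ, hcalc]; push_cast; ring

/-- `‖z^j - 1‖ ≤ ‖z - 1‖` when `‖z‖ ≤ 1`. -/
lemma pow_sub_one_norm_le {z : ℚ_[p]} (hz : ‖z‖ ≤ 1) (j : ℕ) : ‖z^j - 1‖ ≤ ‖z - 1‖ := by
  induction j with
  | zero => simpa using norm_nonneg _
  | succ j ih =>
    have key : z^(j+1) - 1 = z * (z^j - 1) + (z - 1) := by ring
    rw [key]
    refine le_trans (Padic.nonarchimedean _ _) (max_le ?_ le_rfl)
    calc ‖z * (z^j - 1)‖ = ‖z‖ * ‖z^j - 1‖ := norm_mul _ _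
      _ ≤ 1 * ‖z - 1‖ := mul_le_mul hz ih (norm_nonneg _) zero_le_one
      _ = ‖z - 1‖ := one_mul _

/-- Key estimate: `‖z^p - 1 - p (z-1)‖ ≤ ‖z-1‖²`. -/
lemma pow_p_key {z : ℚ_[p]} (hz : ‖z‖ ≤ 1) :
    ‖z^p - 1 - p * (z - 1)‖ ≤ ‖z - 1‖^2 := by
  have hsum : ∀ n : ℕ, ‖∑ j ∈ Finset.range n, (z^j - 1)‖ ≤ ‖z - 1‖ := by
    intro n
    induction n with
    | zero => simpa using norm_nonneg _
    | succ n ih =>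
      rw [Finset.sum_range_succ]
      exact le_trans (Padic.nonarchimedean _ _) (max_le ih (pow_sub_one_norm_le hz n))
  have hfact : z^p - 1 - p * (z - 1) = (∑ j ∈ Finset.range p, (z^j - 1)) * (z - 1) := by
    have := geom_sum_mul z p
    rw [Finset.sum_sub_distrib, sub_mul, this]
    simp [Finset.card_range]
  rw [hfact, norm_mul, sq]
  exact mul_le_mul_of_nonneg_right (hsum p) (norm_nonneg _)

/-- If `‖z-1‖ ≤ p^{-m}` with `m ≥ 1` then `‖z^p - 1‖ ≤ p^{-(m+1)}`. -/
lemma pow_p_step {z : ℚ_[p]} {m : ℕ} (hm : 1 ≤ m) (hz : ‖z‖ ≤ 1)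
    (h : ‖z - 1‖ ≤ pw p m) : ‖z^p - 1‖ ≤ pw p (m+1) := by
  have h1 : z^p - 1 = (z^p - 1 - p * (z - 1)) + p * (z - 1) := by ring
  rw [h1]
  refine le_trans (Padic.nonarchimedean _ _) (max_le ?_ ?_)
  · refine le_trans (pow_p_key hz) ?_
    calc ‖z-1‖^2 ≤ (pw p m)^2 := by
          exact pow_le_pow_left₀ (norm_nonneg _) h 2
      _ = pw p (m + m) := by rw [sq, pw_mul]
      _ ≤ pw p (m+1) := pw_le_pw (by omega)
  · rw [norm_mul, Padic.norm_p]
    calc (p:ℝ)⁻¹ * ‖z-1‖ ≤ (p:ℝ)⁻¹ * pw p m :=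
          mul_le_mul_of_nonneg_left h (inv_nonneg.mpr hp0.le)
      _ = pw p 1 * pw p m := by
          congr 1; rw [pw]; norm_num
      _ = pw p (1 + m) := pw_mul _ _
      _ = pw p (m + 1) := by rw [Nat.add_comm]

lemma norm_le_one_of_norm_sub_one {z : ℚ_[p]} {m : ℕ} (hm : 1 ≤ m)
    (h : ‖z - 1‖ ≤ pw p m) : ‖z‖ = 1 := by
  have h2 : z = 1 + (z - 1) := by ring
  rw [h2, Padic.add_eq_max_of_ne]
  · simp only [norm_one]
    exact max_eq_left (le_trans h (pw_lt_one hm).le)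
  · rw [norm_one]
    exact fun hh => absurd (hh ▸ lt_of_le_of_lt h (pw_lt_one hm)) (lt_irrefl _)

/-- Iterated: `‖z^{p^n} - 1‖ ≤ p^{-(m+n)}`. -/
lemma pow_p_pow {z : ℚ_[p]} {m : ℕ} (hm : 1 ≤ m) (hz : ‖z‖ ≤ 1)
    (h : ‖z - 1‖ ≤ pw p m) (n : ℕ) : ‖z^(p^n) - 1‖ ≤ pw p (m+n) := by
  induction n with
  | zero => simpa using h
  | succ n ih =>
    have hzn : ‖z^(p^n)‖ ≤ 1 := by
      rw [norm_pow]; exact pow_le_one₀ (norm_nonneg _) hz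
    have := pow_p_step (m := m + n) (by omega) hzn ih
    rw [← pow_mul, ← pow_succ] at this
    convert this using 2; omega

section Nsec

variable (p)

instance : NeZero (p^2) := ⟨pow_ne_zero 2 (Fact.out : p.Prime).ne_zero⟩

/-- `N = #(ℤ/p²)ˣ`. -/
noncomputable def Ncard : ℕ := Fintype.card (ZMod (p^2))ˣ

lemma Ncard_eq : Ncard p = p * (p - 1) := by
  rw [Ncard, ZMod.card_units_eq_totient, Nat.totient_prime_pow (Fact.out : p.Prime) (by omega)]
  simp

lemma Ncard_pos : 0 < Ncard p := Fintype.card_pos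

lemma norm_Ncard : ‖((Ncard p : ℚ_[p]))‖ = pw p 1 := by
  have hp2 : 2 ≤ p := (Fact.out : p.Prime).two_le
  have hcast : ((Ncard p : ℚ_[p])) = (p:ℚ_[p]) * (((p:ℤ) - 1 : ℤ) : ℚ_[p]) := by
    rw [Ncard_eq]
    have : ((p - 1 : ℕ) : ℚ_[p]) = (((p:ℤ) - 1 : ℤ) : ℚ_[p]) := by
      rw [Nat.cast_sub (by omega)]; push_cast; ring
    push_cast [this]
    push_cast
    ring
  rw [hcast, norm_mul, Padic.norm_p]
  have h1 : ‖(((p:ℤ) - 1 : ℤ) : ℚ_[p])‖ = 1 := by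
    rcases lt_or_eq_of_le (Padic.norm_int_le_one (p := p) ((p:ℤ) - 1)) with hlt | he
    · exfalso
      rw [Padic.norm_intCast_lt_one_iff] at hlt
      have h2 : (p:ℤ) ∣ 1 := by
        have := (dvd_refl (p:ℤ)).sub hlt
        simpa using this
      have := Int.le_of_dvd one_pos h2
      omega
    · exact he
  rw [h1, mul_one, pw]
  norm_num

end Nsec

/-- Every norm-one element raised to `Ncard p` is `≡ 1 mod p²`. -/
lemma unit_pow_Ncard {w : ℚ_[p]} (hw : ‖w‖ = 1) : ‖w ^ (Ncard p) - 1‖ ≤ pw p 2 := by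
  set z : ℤ_[p] := ⟨w, hw.le⟩ with hz
  have hzu : IsUnit z := PadicInt.isUnit_iff.mpr (by exact hw)
  obtain ⟨ζ, hζ⟩ := hzu
  -- the image of ζ in (ZMod p²)ˣ has order dividing the cardinality
  have hpow : (PadicInt.toZModPow (p := p) 2) (z ^ Ncard p) = 1 := by
    have := pow_card_eq_one (x := (Units.map (PadicInt.toZModPow (p := p) 2).toMonoidHom) ζ)
    have h2 := congrArg (Units.val) this
    rw [Units.val_pow_eq_pow_val, Units.coe_map] at h2
    simp only [RingHom.toMonoidHom_eq_coe, MonoidHom.coe_coe, Units.val_one] at h2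
    rw [← map_pow, hζ] at h2
    simpa [Ncard] using h2
  have hker : z ^ Ncard p - 1 ∈ RingHom.ker (PadicInt.toZModPow (p := p) 2) := by
    rw [RingHom.mem_ker, map_sub, hpow, map_one, sub_self]
  rw [PadicInt.ker_toZModPow] at hker
  have := (PadicInt.norm_le_pow_iff_mem_span_pow (z ^ Ncard p - 1) 2).mpr hker
  have hco : ((z ^ Ncard p - 1 : ℤ_[p]) : ℚ_[p]) = w ^ Ncard p - 1 := by
    push_cast [hz]
    rfl
  rw [PadicInt.norm_def, hco] at this
  exact le_trans this (le_of_eq rfl)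

lemma val_eq_of_norm_eq {x y : ℚ_[p]} (hx : x ≠ 0) (hy : y ≠ 0) (h : ‖x‖ = ‖y‖) :
    x.valuation = y.valuation := by
  rw [Padic.norm_eq_zpow_neg_valuation hx, Padic.norm_eq_zpow_neg_valuation hy] at h
  have := (zpow_right_inj₀ (hp0 (p := p)) (ne_of_gt (hp1 (p := p)))).mp h
  omega

lemma val_eq_zero_of_norm_one {x : ℚ_[p]} (hx : x ≠ 0) (h : ‖x‖ = 1) :
    x.valuation = 0 := by
  have h1 : ‖x‖ = ‖(1:ℚ_[p])‖ := by rw [h, norm_one]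
  rw [val_eq_of_norm_eq hx one_ne_zero h1, Padic.valuation_one]

section units

variable (p)

lemma p_ne_zero' : (p:ℚ_[p]) ≠ 0 := by
  exact_mod_cast Nat.cast_ne_zero.mpr (Fact.out : p.Prime).ne_zero

lemma g_norm_one : ‖(1 + (p:ℚ_[p])^2)‖ = 1 := by
  apply norm_le_one_of_norm_sub_one (m := 2) (by omega)
  simpa using (norm_p_pow (p := p) 2).le

lemma g_ne_zero : (1 + (p:ℚ_[p])^2) ≠ 0 := by
  intro h
  have := g_norm_one p
  rw [h, norm_zero] at this
  norm_num at this

/-- The unit `p`. -/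
noncomputable def pU : ℚ_[p]ˣ := Units.mk0 (p:ℚ_[p]) (p_ne_zero' p)

/-- The unit `1 + p²`. -/
noncomputable def gU : ℚ_[p]ˣ := Units.mk0 (1 + (p:ℚ_[p])^2) (g_ne_zero p)

end units

/-- Unit part of `x`. -/
noncomputable def wU (x : ℚ_[p]ˣ) : ℚ_[p]ˣ := x * (pU p) ^ (-(x:ℚ_[p]).valuation)

lemma val_pU_zpow (z : ℤ) : (((pU p) ^ z : ℚ_[p]ˣ) : ℚ_[p]) = (p:ℚ_[p]) ^ z := by
  rw [Units.val_zpow_eq_zpow_val]; rfl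

lemma norm_wU (x : ℚ_[p]ˣ) : ‖((wU x : ℚ_[p]ˣ) : ℚ_[p])‖ = 1 := by
  set v := (x:ℚ_[p]).valuation
  rw [wU, Units.val_mul, norm_mul, val_pU_zpow, norm_zpow, Padic.norm_p,
    Padic.norm_eq_zpow_neg_valuation x.ne_zero]
  rw [inv_zpow', ← zpow_add₀ (ne_of_gt (hp0 (p := p)))]
  simp

lemma wU_mul (x y : ℚ_[p]ˣ) : wU (x * y) = wU x * wU y := by
  rw [wU, wU, wU]
  have hv : ((x * y : ℚ_[p]ˣ) : ℚ_[p]).valuation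
      = (x:ℚ_[p]).valuation + (y:ℚ_[p]).valuation := by
    rw [Units.val_mul]
    exact Padic.valuation_mul x.ne_zero y.ne_zero
  rw [hv, neg_add, zpow_add]
  rw [mul_mul_mul_comm]

lemma wU_pU : wU (pU p) = 1 := by
  rw [wU]
  have : ((pU p : ℚ_[p]ˣ) : ℚ_[p]).valuation = 1 := Padic.valuation_p
  rw [this]
  simp

lemma wU_of_norm_one {x : ℚ_[p]ˣ} (h : ‖(x : ℚ_[p])‖ = 1) : wU x = x := by
  rw [wU, val_eq_zero_of_norm_one x.ne_zero h]
  simp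

lemma wU_gU : wU (gU p) = gU p :=
  wU_of_norm_one (g_norm_one p)

lemma ppow_ne_zero (k : ℕ) : ((p:ℚ_[p]))^k ≠ 0 := pow_ne_zero _ (p_ne_zero' p)

lemma norm_div_ppow_le {a : ℚ_[p]} {m n : ℕ} (h : ‖a‖ ≤ pw p (m + n)) :
    ‖a / (p:ℚ_[p])^n‖ ≤ pw p m := by
  rw [norm_div, norm_p_pow, div_le_iff₀ (pw_pos n), pw_mul]
  exact h

/-- The approximating sequence for the logarithm of the unit part. -/
noncomputable def aseq (u : ℚ_[p]ˣ) (n : ℕ) : ℚ_[p] :=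
  (((wU u : ℚ_[p]ˣ) : ℚ_[p]) ^ (Ncard p * p ^ n) - 1) / (p:ℚ_[p])^n

lemma W_pow_est {u : ℚ_[p]ˣ} {m : ℕ} (hm : 2 ≤ m)
    (hWm : ‖((wU u : ℚ_[p]ˣ) : ℚ_[p]) ^ (Ncard p) - 1‖ ≤ pw p m) (n : ℕ) :
    ‖((wU u : ℚ_[p]ˣ) : ℚ_[p]) ^ (Ncard p * p ^ n) - 1‖ ≤ pw p (m + n) := by
  set W := ((wU u : ℚ_[p]ˣ) : ℚ_[p])
  have hW : ‖W‖ = 1 := norm_wU u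
  have hz : ‖W ^ (Ncard p)‖ ≤ 1 := by rw [norm_pow, hW, one_pow]
  have := pow_p_pow (z := W ^ (Ncard p)) (by omega) hz hWm n
  rw [← pow_mul] at this
  exact this

lemma aseq_norm_le {u : ℚ_[p]ˣ} {m : ℕ} (hm : 2 ≤ m)
    (hWm : ‖((wU u : ℚ_[p]ˣ) : ℚ_[p]) ^ (Ncard p) - 1‖ ≤ pw p m) (n : ℕ) :
    ‖aseq u n‖ ≤ pw p m :=
  norm_div_ppow_le (W_pow_est hm hWm n)

lemma aseq_diff {u : ℚ_[p]ˣ} {m : ℕ} (hm : 2 ≤ m)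
    (hWm : ‖((wU u : ℚ_[p]ˣ) : ℚ_[p]) ^ (Ncard p) - 1‖ ≤ pw p m) (n : ℕ) :
    ‖aseq u (n+1) - aseq u n‖ ≤ pw p (2*m - 1 + n) := by
  set W := ((wU u : ℚ_[p]ˣ) : ℚ_[p]) with hWdef
  have hW : ‖W‖ = 1 := norm_wU u
  set Z := W ^ (Ncard p * p ^ n) with hZdef
  have hZnorm : ‖Z‖ ≤ 1 := by rw [hZdef, norm_pow, hW, one_pow]
  have hZ1 : ‖Z - 1‖ ≤ pw p (m + n) := W_pow_est hm hWm n
  have hpow : W ^ (Ncard p * p ^ (n+1)) = Z ^ p := by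
    rw [hZdef, ← pow_mul, pow_succ, mul_assoc]
  have e1 : aseq u (n+1) = (Z^p - 1) / (p:ℚ_[p])^(n+1) := by
    rw [aseq, ← hWdef, hpow]
  have e2 : aseq u n = p * (Z - 1) / (p:ℚ_[p])^(n+1) := by
    rw [aseq, ← hWdef, ← hZdef, pow_succ, mul_comm ((p:ℚ_[p])^n) ((p:ℚ_[p])),
      mul_div_mul_left _ _ (p_ne_zero' p)]
  have heq : aseq u (n+1) - aseq u n
      = (Z^p - 1 - p * (Z - 1)) / (p:ℚ_[p])^(n+1) := by
    rw [e1, e2, div_sub_div_same]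
  rw [heq]
  have h2 : (2*m - 1 + n) + (n + 1) = (m+n) + (m+n) := by omega
  apply norm_div_ppow_le
  rw [h2]
  refine le_trans (pow_p_key hZnorm) ?_
  rw [sq, ← pw_mul]
  exact mul_le_mul hZ1 hZ1 (norm_nonneg _) (pw_pos _).le

lemma aseq_dist_zero {u : ℚ_[p]ˣ} {m : ℕ} (hm : 2 ≤ m)
    (hWm : ‖((wU u : ℚ_[p]ˣ) : ℚ_[p]) ^ (Ncard p) - 1‖ ≤ pw p m) (n : ℕ) :
    ‖aseq u n - aseq u 0‖ ≤ pw p (2*m - 1) := by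
  induction n with
  | zero => simp only [sub_self, norm_zero]; exact (pw_pos _).le
  | succ n ih =>
    have h1 : aseq u (n+1) - aseq u 0 = (aseq u (n+1) - aseq u n) + (aseq u n - aseq u 0) := by
      ring
    rw [h1]
    refine le_trans (Padic.nonarchimedean _ _) (max_le ?_ ih)
    exact le_trans (aseq_diff hm hWm n) (pw_le_pw (by omega))

lemma base_est (u : ℚ_[p]ˣ) :
    ‖((wU u : ℚ_[p]ˣ) : ℚ_[p]) ^ (Ncard p) - 1‖ ≤ pw p 2 :=
  unit_pow_Ncard (norm_wU u)

lemma aseq_cauchy (u : ℚ_[p]ˣ) : CauchySeq (aseq u) := by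
  apply cauchySeq_of_le_geometric ((p:ℝ)⁻¹) (pw p 3) (by
    rw [inv_lt_one_iff₀]; right; exact hp1)
  intro n
  rw [dist_eq_norm, norm_sub_rev]
  have := aseq_diff (u := u) (m := 2) le_rfl (base_est u) n
  refine le_trans this (le_of_eq ?_)
  show pw p (3 + n) = _
  rw [← pw_mul]
  congr 1
  rw [pw, ← zpow_natCast ((p:ℝ)⁻¹), inv_zpow']

/-- The (normalized) `p`-adic logarithm of the unit part. -/
noncomputable def Lfun (u : ℚ_[p]ˣ) : ℚ_[p] :=
  Classical.choose (cauchySeq_tendsto_of_complete (aseq_cauchy u))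

lemma Lfun_tendsto (u : ℚ_[p]ˣ) : Tendsto (aseq u) atTop (𝓝 (Lfun u)) :=
  Classical.choose_spec (cauchySeq_tendsto_of_complete (aseq_cauchy u))

lemma norm_sub_le_of_tendsto {s : ℕ → ℚ_[p]} {l b : ℚ_[p]} {C : ℝ}
    (h : Tendsto s atTop (𝓝 l)) (hb : ∀ n, ‖s n - b‖ ≤ C) : ‖l - b‖ ≤ C :=
  le_of_tendsto ((h.sub_const b).norm) (Eventually.of_forall hb)

lemma norm_Lfun_le {u : ℚ_[p]ˣ} {m : ℕ} (hm : 2 ≤ m)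
    (hWm : ‖((wU u : ℚ_[p]ˣ) : ℚ_[p]) ^ (Ncard p) - 1‖ ≤ pw p m) :
    ‖Lfun u‖ ≤ pw p m := by
  have := norm_sub_le_of_tendsto (b := 0) (Lfun_tendsto u) (fun n => by
    simpa using aseq_norm_le hm hWm n)
  simpa using this

lemma Lfun_sub_aseq_zero {u : ℚ_[p]ˣ} {m : ℕ} (hm : 2 ≤ m)
    (hWm : ‖((wU u : ℚ_[p]ˣ) : ℚ_[p]) ^ (Ncard p) - 1‖ ≤ pw p m) :
    ‖Lfun u - aseq u 0‖ ≤ pw p (2*m - 1) :=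
  norm_sub_le_of_tendsto (Lfun_tendsto u) (aseq_dist_zero hm hWm)

lemma pw_eq_inv_pow (n : ℕ) : pw p n = ((p:ℝ)⁻¹)^n := by
  rw [pw, ← zpow_natCast ((p:ℝ)⁻¹), inv_zpow']

lemma aseq_mul (u v : ℚ_[p]ˣ) (n : ℕ) :
    aseq (u * v) n = aseq u n + aseq v n + (p:ℚ_[p])^n * (aseq u n * aseq v n) := by
  have h1 : aseq (u * v) n = ((((wU u : ℚ_[p]ˣ):ℚ_[p])^(Ncard p * p^n) - 1)
      + (((wU v : ℚ_[p]ˣ):ℚ_[p])^(Ncard p * p^n) - 1)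
      + (((wU u : ℚ_[p]ˣ):ℚ_[p])^(Ncard p * p^n) - 1) * (((wU v : ℚ_[p]ˣ):ℚ_[p])^(Ncard p * p^n) - 1))
      / (p:ℚ_[p])^n := by
    rw [aseq, wU_mul, Units.val_mul, mul_pow]
    congr 1
    ring
  rw [h1, aseq, aseq]
  rw [div_mul_div_comm, ← mul_div_assoc, mul_div_mul_left _ _ (ppow_ne_zero n),
    ← add_div, ← add_div]

lemma Lfun_mul (u v : ℚ_[p]ˣ) : Lfun (u * v) = Lfun u + Lfun v := by
  have herr : Tendsto (fun n => (p:ℚ_[p])^n * (aseq u n * aseq v n)) atTop (𝓝 0) := by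
    apply squeeze_zero_norm (a := fun n => pw p 4 * ((p:ℝ)⁻¹)^n)
    · intro n
      rw [norm_mul, norm_mul, norm_p_pow, ← pw_eq_inv_pow]
      calc pw p n * (‖aseq u n‖ * ‖aseq v n‖)
          ≤ pw p n * (pw p 2 * pw p 2) := by
            refine mul_le_mul_of_nonneg_left ?_ (pw_pos n).le
            exact mul_le_mul (aseq_norm_le le_rfl (base_est u) n)
              (aseq_norm_le le_rfl (base_est v) n) (norm_nonneg _) (pw_pos _).le
        _ = pw p 4 * pw p n := by rw [pw_mul, mul_comm]
    · have : Tendsto (fun n : ℕ => ((p:ℝ)⁻¹)^n) atTop (𝓝 0) := by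
        apply tendsto_pow_atTop_nhds_zero_of_lt_one
          (inv_nonneg.mpr hp0.le)
        rw [inv_lt_one_iff₀]; right; exact hp1
      simpa using this.const_mul (pw p 4)
  have h1 : Tendsto (aseq (u*v)) atTop (𝓝 (Lfun u + Lfun v + 0)) := by
    have := ((Lfun_tendsto u).add (Lfun_tendsto v)).add herr
    apply Tendsto.congr _ this
    intro n
    rw [aseq_mul]
  rw [add_zero] at h1
  exact tendsto_nhds_unique (Lfun_tendsto (u*v)) h1

lemma Lfun_pU : Lfun (pU p) = 0 := by
  have h0 : ∀ n, aseq (pU p) n = 0 := by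
    intro n
    rw [aseq, wU_pU]
    simp
  have : Tendsto (aseq (pU p)) atTop (𝓝 0) := by
    rw [funext h0]
    exact tendsto_const_nhds
  exact tendsto_nhds_unique (Lfun_tendsto _) this

lemma Lfun_gU_ne : Lfun (gU p) ≠ 0 := by
  have hval : ((wU (gU p) : ℚ_[p]ˣ) : ℚ_[p]) = 1 + (p:ℚ_[p])^2 := by rw [wU_gU]; rfl
  have hx : ‖(p:ℚ_[p])^2‖ ≤ 1 := by
    rw [norm_p_pow]; exact (pw_lt_one (by omega)).le
  obtain ⟨c, hc, hcalc⟩ := one_add_pow (Ncard p) hx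
  have ha0 : aseq (gU p) 0 = (Ncard p) * (p:ℚ_[p])^2 + ((p:ℚ_[p])^2)^2 * c := by
    rw [aseq, hval]
    simp only [pow_zero, mul_one, div_one]
    rw [hcalc]
    ring
  have hnorm1 : ‖((Ncard p : ℚ_[p])) * (p:ℚ_[p])^2‖ = pw p 3 := by
    rw [norm_mul, norm_Ncard, norm_p_pow, pw_mul]
  have hnorm2 : ‖((p:ℚ_[p])^2)^2 * c‖ ≤ pw p 4 := by
    rw [norm_mul, ← pow_mul, norm_p_pow]
    calc pw p 4 * ‖c‖ ≤ pw p 4 * 1 := mul_le_mul_of_nonneg_left hc (pw_pos _).le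
      _ = pw p 4 := mul_one _
  have ha0norm : ‖aseq (gU p) 0‖ = pw p 3 := by
    rw [ha0, Padic.add_eq_max_of_ne, hnorm1]
    · exact max_eq_left (le_trans hnorm2 (pw_le_pw (by omega)))
    · rw [hnorm1]
      intro hcon
      exact absurd (hcon ▸ lt_of_le_of_lt hnorm2 (pw_lt_pw (by omega))) (lt_irrefl _)
  have hW3 : ‖((wU (gU p) : ℚ_[p]ˣ) : ℚ_[p]) ^ (Ncard p) - 1‖ ≤ pw p 3 := by
    have : ((wU (gU p) : ℚ_[p]ˣ) : ℚ_[p]) ^ (Ncard p) - 1 = aseq (gU p) 0 := by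
      rw [aseq]; simp
    rw [this, ha0norm]
  have hclose := Lfun_sub_aseq_zero (m := 3) (by omega) hW3
  intro hcon
  rw [hcon, zero_sub, norm_neg, ha0norm] at hclose
  exact absurd (lt_of_le_of_lt hclose (pw_lt_pw (by omega))) (lt_irrefl _)

lemma norm_Lfun_of_close {u : ℚ_[p]ˣ} {m : ℕ} (hm : 2 ≤ m)
    (h : ‖(u:ℚ_[p]) - 1‖ ≤ pw p m) : ‖Lfun u‖ ≤ pw p m := by
  have hnorm : ‖(u:ℚ_[p])‖ = 1 := norm_le_one_of_norm_sub_one (by omega) h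
  have hwu : wU u = u := wU_of_norm_one hnorm
  apply norm_Lfun_le hm
  rw [hwu]
  exact le_trans (pow_sub_one_norm_le hnorm.le (Ncard p)) h

lemma Lfun_continuous : Continuous (Lfun (p := p)) := by
  rw [continuous_iff_continuousAt]
  intro u₀
  rw [ContinuousAt, Metric.tendsto_nhds]
  intro ε hε
  obtain ⟨n, hn⟩ := exists_pow_lt_of_lt_one hε
    (by rw [inv_lt_one_iff₀]; right; exact hp1 (p := p))
  set m : ℕ := n + 2 with hm
  have hpwm : pw p m < ε := by
    refine lt_of_le_of_lt ?_ hn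
    rw [← pw_eq_inv_pow]
    exact pw_le_pw (by omega)
  have hu₀ : ‖(u₀:ℚ_[p])‖ > 0 := norm_pos_iff.mpr u₀.ne_zero
  have hnb : {u : ℚ_[p]ˣ | ‖(u:ℚ_[p]) - (u₀:ℚ_[p])‖ ≤ pw p m * ‖(u₀:ℚ_[p])‖} ∈ 𝓝 u₀ := by
    have hcont : ContinuousAt (fun u : ℚ_[p]ˣ => (u:ℚ_[p])) u₀ :=
      (Units.isOpenEmbedding_val.continuous).continuousAt
    have hball : Metric.closedBall ((u₀:ℚ_[p])) (pw p m * ‖(u₀:ℚ_[p])‖) ∈ 𝓝 ((u₀:ℚ_[p])) :=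
      Metric.closedBall_mem_nhds _ (mul_pos (pw_pos m) hu₀)
    have := hcont.preimage_mem_nhds hball
    refine Filter.mem_of_superset this ?_
    intro u hu
    simpa [Metric.mem_closedBall, dist_eq_norm] using hu
  refine Filter.mem_of_superset hnb ?_
  intro u hu
  simp only [Set.mem_setOf_eq] at hu ⊢
  have hdiff : Lfun u - Lfun u₀ = Lfun (u * u₀⁻¹) := by
    have : (u * u₀⁻¹) * u₀ = u := by group
    have h2 := Lfun_mul (u * u₀⁻¹) u₀
    rw [this] at h2
    rw [h2]; ring
  have hclose : ‖((u * u₀⁻¹ : ℚ_[p]ˣ) : ℚ_[p]) - 1‖ ≤ pw p m := by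
    have hval : ((u * u₀⁻¹ : ℚ_[p]ˣ) : ℚ_[p]) - 1
        = ((u:ℚ_[p]) - (u₀:ℚ_[p])) * ((u₀:ℚ_[p]))⁻¹ := by
      rw [Units.val_mul]
      rw [← Units.val_inv_eq_inv_val]
      field_simp
      rw [mul_sub, mul_comm, Units.inv_mul]
    rw [hval, norm_mul, norm_inv]
    calc ‖(u:ℚ_[p]) - (u₀:ℚ_[p])‖ * ‖(u₀:ℚ_[p])‖⁻¹
        ≤ (pw p m * ‖(u₀:ℚ_[p])‖) * ‖(u₀:ℚ_[p])‖⁻¹ :=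
          mul_le_mul_of_nonneg_right hu (inv_nonneg.mpr (norm_nonneg _))
      _ = pw p m := by field_simp
  rw [dist_eq_norm, hdiff]
  exact lt_of_le_of_lt (norm_Lfun_of_close (by omega) hclose) hpwm

lemma step_exact {Z : ℚ_[p]} {n : ℕ} {s : ℚ_[p]} (hs : ‖s‖ = 1)
    (hz : Z = 1 + (p:ℚ_[p])^(n+2) * s) :
    ∃ s' : ℚ_[p], ‖s'‖ = 1 ∧ Z^p = 1 + (p:ℚ_[p])^(n+3) * s' := by
  have hzz : Z - 1 = (p:ℚ_[p])^(n+2) * s := by rw [hz]; ring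
  have hz1 : ‖Z - 1‖ = pw p (n+2) := by
    rw [hzz, norm_mul, norm_p_pow, hs, mul_one]
  have hznorm : ‖Z‖ = 1 :=
    norm_le_one_of_norm_sub_one (m := n+2) (by omega) hz1.le
  have hqex : ∃ q : ℚ_[p], (p:ℚ_[p])^(n+3) * q = Z^p - 1 - p*(Z-1) ∧ ‖q‖ ≤ pw p (n+1) := by
    refine ⟨(Z^p - 1 - p*(Z-1))/(p:ℚ_[p])^(n+3), mul_div_cancel₀ _ (ppow_ne_zero _), ?_⟩
    apply norm_div_ppow_le
    have := pow_p_key (z := Z) hznorm.le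
    rw [hz1] at this
    refine le_trans this ?_
    rw [sq, pw_mul]
    exact pw_le_pw (by omega)
  obtain ⟨q, hkey, hq⟩ := hqex
  have hqlt : ‖q‖ < 1 := lt_of_le_of_lt hq (pw_lt_one (by omega))
  refine ⟨s + q, ?_, ?_⟩
  · rw [Padic.add_eq_max_of_ne, hs]
    · exact max_eq_left hqlt.le
    · rw [hs]
      intro hcon
      rw [← hcon] at hqlt
      exact lt_irrefl _ hqlt
  · linear_combination (p:ℚ_[p]) * hzz - hkey

/-- Exact shape of `(1+p²)^(pⁿ)`. -/
lemma g_pow_pow (n : ℕ) : ∃ s : ℚ_[p], ‖s‖ = 1 ∧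
    ((gU p : ℚ_[p]ˣ) : ℚ_[p]) ^ (p^n) = 1 + (p:ℚ_[p])^(n+2) * s := by
  induction n with
  | zero =>
    exact ⟨1, norm_one, by simp [gU, Units.val_mk0]⟩
  | succ n ih =>
    obtain ⟨s, hs, hz⟩ := ih
    obtain ⟨s', hs', hz'⟩ := step_exact hs hz
    refine ⟨s', hs', ?_⟩
    rw [pow_succ, pow_mul]
    exact hz'

section Efield

variable {E : Type} [NontriviallyNormedField E] [NormedAlgebra ℚ_[p] E]
variable {f : ℚ_[p]ˣ → E}

lemma f_one (hf : ∀ x y, f (x*y) = f x + f y) : f 1 = 0 := by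
  have := hf 1 1
  rw [mul_one] at this
  linear_combination -this

lemma f_pow (hf : ∀ x y, f (x*y) = f x + f y) (x : ℚ_[p]ˣ) (n : ℕ) :
    f (x^n) = n • f x := by
  induction n with
  | zero => simpa using f_one hf
  | succ n ih => rw [pow_succ, hf, ih, succ_nsmul]

lemma f_inv (hf : ∀ x y, f (x*y) = f x + f y) (x : ℚ_[p]ˣ) : f x⁻¹ = - f x := by
  have := hf x x⁻¹
  rw [mul_inv_cancel] at this
  rw [f_one hf] at this
  linear_combination -this

lemma f_zpow (hf : ∀ x y, f (x*y) = f x + f y) (hx : f x = 0) (z : ℤ) :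
    f (x ^ z) = 0 := by
  obtain ⟨n, hn | hn⟩ := z.eq_nat_or_neg
  · rw [hn, zpow_natCast, f_pow hf, hx, smul_zero]
  · rw [hn, zpow_neg, zpow_natCast, f_inv hf, f_pow hf, hx, smul_zero, neg_zero]

/-- The digit-removal step. -/
lemma digit_step (hf : ∀ x y, f (x*y) = f x + f y) (hg : f (gU p) = 0)
    (n : ℕ) (u : ℚ_[p]ˣ) (hu : ‖(u:ℚ_[p]) - 1‖ ≤ pw p (n+2)) :
    ∃ u' : ℚ_[p]ˣ, ‖(u':ℚ_[p]) - 1‖ ≤ pw p (n+3) ∧ f u' = f u := by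
  obtain ⟨s, hs, hgpow⟩ := g_pow_pow (p := p) n
  have hs0 : s ≠ 0 := by
    intro hcon; rw [hcon, norm_zero] at hs; norm_num at hs
  -- the digit
  obtain ⟨t, htmul, ht⟩ : ∃ t : ℚ_[p], t * (p:ℚ_[p])^(n+2) = (u:ℚ_[p]) - 1 ∧ ‖t‖ ≤ 1 := by
    refine ⟨((u:ℚ_[p]) - 1)/(p:ℚ_[p])^(n+2), div_mul_cancel₀ _ (ppow_ne_zero _), ?_⟩
    have := norm_div_ppow_le (p := p) (m := 0) (n := n+2) (a := (u:ℚ_[p]) - 1)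
      (by simpa using hu)
    simpa [pw_zero] using this
  obtain ⟨x, hts, hx⟩ : ∃ x : ℚ_[p], t = x * s ∧ ‖x‖ ≤ 1 := by
    refine ⟨t * s⁻¹, by field_simp, ?_⟩
    rw [norm_mul, norm_inv, hs, inv_one, mul_one]
    exact ht
  set ξ : ℤ_[p] := ⟨x, hx⟩ with hξdef
  set a : ℕ := ξ.appr 1 with hadef
  have hxa : ‖x - (a:ℚ_[p])‖ ≤ pw p 1 := by
    have h1 := (PadicInt.norm_le_pow_iff_mem_span_pow (ξ - (a:ℤ_[p])) 1).mpr
      (by rw [pow_one]; simpa using PadicInt.appr_spec 1 ξ)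
    rw [PadicInt.norm_def] at h1
    have hco : ((ξ - (a:ℤ_[p]) : ℤ_[p]) : ℚ_[p]) = x - (a:ℚ_[p]) := by
      push_cast [hξdef]
      rfl
    rw [hco] at h1
    simpa [pw] using h1
  -- the correction unit
  refine ⟨u * ((gU p)^(p^n * a))⁻¹, ?_, ?_⟩
  · have hGnorm : ‖((gU p : ℚ_[p]ˣ) : ℚ_[p]) ^ (p^n)‖ = 1 := by
      apply norm_le_one_of_norm_sub_one (m := n+2) (by omega)
      rw [hgpow]
      have : 1 + (p:ℚ_[p])^(n+2) * s - 1 = (p:ℚ_[p])^(n+2) * s := by ring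
      rw [this, norm_mul, norm_p_pow, hs, mul_one]
    obtain ⟨c, hc, hGa⟩ := one_add_pow (x := (p:ℚ_[p])^(n+2) * s) a
      (by rw [norm_mul, norm_p_pow, hs, mul_one]; exact (pw_lt_one (by omega)).le)
    have hval : ((u * ((gU p)^(p^n * a))⁻¹ : ℚ_[p]ˣ) : ℚ_[p])
        = (u:ℚ_[p]) * (((gU p : ℚ_[p]ˣ) : ℚ_[p]) ^ (p^n * a))⁻¹ := by
      simp
    have hGa' : ((gU p : ℚ_[p]ˣ) : ℚ_[p]) ^ (p^n * a)
        = (1 + (p:ℚ_[p])^(n+2) * s) ^ a := by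
      rw [pow_mul, hgpow]
    have hdiffnorm : ‖(u:ℚ_[p]) - ((gU p : ℚ_[p]ˣ) : ℚ_[p]) ^ (p^n * a)‖ ≤ pw p (n+3) := by
      have hid : (u:ℚ_[p]) - ((gU p : ℚ_[p]ˣ) : ℚ_[p]) ^ (p^n * a)
          = (p:ℚ_[p])^(n+2) * ((x - a) * s) - ((p:ℚ_[p])^(n+2) * s)^2 * c := by
        rw [hGa', hGa]
        linear_combination (p:ℚ_[p])^(n+2) * hts - htmul
      rw [hid]
      have h1 : ‖(p:ℚ_[p])^(n+2) * ((x - a) * s)‖ ≤ pw p (n+3) := by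
        rw [norm_mul, norm_mul, norm_p_pow, hs, mul_one]
        calc pw p (n+2) * ‖x - (a:ℚ_[p])‖ ≤ pw p (n+2) * pw p 1 :=
              mul_le_mul_of_nonneg_left hxa (pw_pos _).le
          _ = pw p (n+3) := pw_mul _ _
      have h2 : ‖((p:ℚ_[p])^(n+2) * s)^2 * c‖ ≤ pw p (n+3) := by
        rw [norm_mul, norm_pow, norm_mul, norm_p_pow, hs, mul_one]
        calc (pw p (n+2))^2 * ‖c‖ ≤ (pw p (n+2))^2 * 1 :=
              mul_le_mul_of_nonneg_left hc (sq_nonneg _)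
          _ = pw p (2*(n+2)) := by rw [mul_one, sq, pw_mul]; congr 1; omega
          _ ≤ pw p (n+3) := pw_le_pw (by omega)
      rw [sub_eq_add_neg]
      refine le_trans (Padic.nonarchimedean _ _) (max_le h1 ?_)
      rw [norm_neg]; exact h2
    rw [hval]
    have hGainv : ‖(((gU p : ℚ_[p]ˣ) : ℚ_[p]) ^ (p^n * a))⁻¹‖ = 1 := by
      rw [norm_inv]
      rw [pow_mul, norm_pow, hGnorm, one_pow, inv_one]
    have hfactor : (u:ℚ_[p]) * (((gU p : ℚ_[p]ˣ) : ℚ_[p]) ^ (p^n * a))⁻¹ - 1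
        = ((u:ℚ_[p]) - ((gU p : ℚ_[p]ˣ) : ℚ_[p]) ^ (p^n * a))
          * (((gU p : ℚ_[p]ˣ) : ℚ_[p]) ^ (p^n * a))⁻¹ := by
      have hGa0 : ((gU p : ℚ_[p]ˣ) : ℚ_[p]) ^ (p^n * a) ≠ 0 :=
        pow_ne_zero _ (gU p).ne_zero
      field_simp
    rw [hfactor, norm_mul, hGainv, mul_one]
    exact hdiffnorm
  · rw [hf, f_inv hf, f_pow hf, hg, smul_zero, neg_zero, add_zero]

lemma vanish_near (hcont : Continuous f) (hf : ∀ x y, f (x*y) = f x + f y)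
    (hg : f (gU p) = 0) {u : ℚ_[p]ˣ} (hu : ‖(u:ℚ_[p]) - 1‖ ≤ pw p 2) : f u = 0 := by
  have hex : ∀ n, ∃ u' : ℚ_[p]ˣ, ‖(u':ℚ_[p]) - 1‖ ≤ pw p (n+2) ∧ f u' = f u := by
    intro n
    induction n with
    | zero => exact ⟨u, by simpa using hu, rfl⟩
    | succ n ih =>
      obtain ⟨v, hv1, hv2⟩ := ih
      obtain ⟨v', h1, h2⟩ := digit_step hf hg n v hv1
      refine ⟨v', ?_, h2.trans hv2⟩
      have : n + 1 + 2 = n + 3 := by omega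
      rw [this]
      exact h1
  choose v hv1 hv2 using hex
  have hvaltend : Tendsto (fun n => ((v n : ℚ_[p]ˣ) : ℚ_[p])) atTop (𝓝 1) := by
    have h0 : Tendsto (fun n => ((v n : ℚ_[p]ˣ) : ℚ_[p]) - 1) atTop (𝓝 0) := by
      apply squeeze_zero_norm (a := fun n => pw p 2 * ((p:ℝ)⁻¹)^n)
      · intro n
        refine le_trans (hv1 n) (le_of_eq ?_)
        rw [← pw_eq_inv_pow, pw_mul]
        congr 1
        omega
      · have : Tendsto (fun n : ℕ => ((p:ℝ)⁻¹)^n) atTop (𝓝 0) :=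
          tendsto_pow_atTop_nhds_zero_of_lt_one (inv_nonneg.mpr hp0.le)
            (by rw [inv_lt_one_iff₀]; right; exact hp1)
        simpa using this.const_mul (pw p 2)
    have := h0.add_const 1
    simpa using this
  have hvtend : Tendsto v atTop (𝓝 (1 : ℚ_[p]ˣ)) := by
    rw [Units.isOpenEmbedding_val.tendsto_nhds_iff]
    simpa [Function.comp_def] using hvaltend
  have h1 : Tendsto (fun n => f (v n)) atTop (𝓝 (f 1)) :=
    (hcont.continuousAt.tendsto).comp hvtend
  have h2 : (fun n => f (v n)) = fun _ => f u := funext hv2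
  rw [h2] at h1
  rw [f_one hf] at h1
  exact tendsto_nhds_unique tendsto_const_nhds h1

lemma vanish (hcont : Continuous f) (hf : ∀ x y, f (x*y) = f x + f y)
    (hpz : f (pU p) = 0) (hg : f (gU p) = 0) : f = 0 := by
  haveI : CharZero E :=
    charZero_of_injective_algebraMap (algebraMap ℚ_[p] E).injective
  funext x
  have hx : x = wU x * (pU p)^((x:ℚ_[p]).valuation) := by
    rw [wU, mul_assoc, ← zpow_add, neg_add_cancel, zpow_zero, mul_one]
  have hfw : f (wU x) = 0 := by
    have hbase : ‖((wU x ^ (Ncard p) : ℚ_[p]ˣ) : ℚ_[p]) - 1‖ ≤ pw p 2 := by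
      rw [Units.val_pow_eq_pow_val]
      exact base_est x
    have hvan := vanish_near hcont hf hg hbase
    rw [f_pow hf] at hvan
    have hN : ((Ncard p : E)) * f (wU x) = 0 := by
      rw [← nsmul_eq_mul]
      exact hvan
    rcases mul_eq_zero.mp hN with h | h
    · exfalso
      have hnz : (Ncard p : E) ≠ 0 := Nat.cast_ne_zero.mpr (Ncard_pos p).ne'
      exact hnz h
    · exact h
  rw [hx, hf, hfw, f_zpow hf hpz, add_zero]
  rfl

variable (p E)

/-- The valuation homomorphism. -/
noncomputable def F1 : ℚ_[p]ˣ → E :=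
  fun x => algebraMap ℚ_[p] E (((x:ℚ_[p]).valuation : ℚ_[p]))

/-- The logarithm homomorphism. -/
noncomputable def F2 : ℚ_[p]ˣ → E :=
  fun x => algebraMap ℚ_[p] E (Lfun x)

lemma val_locally_const (x₀ : ℚ_[p]ˣ) :
    ∀ᶠ x : ℚ_[p]ˣ in 𝓝 x₀, (x:ℚ_[p]).valuation = ((x₀:ℚ_[p])).valuation := by
  have hx₀ : ‖(x₀:ℚ_[p])‖ > 0 := norm_pos_iff.mpr x₀.ne_zero
  have hnb : {x : ℚ_[p]ˣ | ‖(x:ℚ_[p]) - (x₀:ℚ_[p])‖ < ‖(x₀:ℚ_[p])‖} ∈ 𝓝 x₀ := by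
    have hcont : ContinuousAt (fun x : ℚ_[p]ˣ => (x:ℚ_[p])) x₀ :=
      (Units.isOpenEmbedding_val.continuous).continuousAt
    have hball : Metric.ball ((x₀:ℚ_[p])) (‖(x₀:ℚ_[p])‖) ∈ 𝓝 ((x₀:ℚ_[p])) :=
      Metric.ball_mem_nhds _ hx₀
    have := hcont.preimage_mem_nhds hball
    refine Filter.mem_of_superset this ?_
    intro x hxx
    simpa [Metric.mem_ball, dist_eq_norm] using hxx
  refine Filter.eventually_of_mem hnb ?_
  intro x hxx
  simp only [Set.mem_setOf_eq] at hxx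
  have hnorm : ‖(x:ℚ_[p])‖ = ‖(x₀:ℚ_[p])‖ := by
    have hde : (x:ℚ_[p]) = ((x:ℚ_[p]) - (x₀:ℚ_[p])) + (x₀:ℚ_[p]) := by ring
    rw [hde, Padic.add_eq_max_of_ne (ne_of_lt hxx)]
    exact max_eq_right hxx.le
  exact val_eq_of_norm_eq x.ne_zero x₀.ne_zero hnorm

lemma F1_cont : Continuous (F1 p E) := by
  rw [continuous_iff_continuousAt]
  intro x₀
  have hev : (F1 p E) =ᶠ[𝓝 x₀] (fun _ => F1 p E x₀) := by
    refine (val_locally_const p x₀).mono ?_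
    intro x hxx
    rw [F1, F1, hxx]
  exact (Filter.Tendsto.congr' hev.symm tendsto_const_nhds : _)

lemma F1_hom : ∀ x y : ℚ_[p]ˣ, F1 p E (x * y) = F1 p E x + F1 p E y := by
  intro x y
  simp only [F1, ← map_add]
  congr 1
  rw [Units.val_mul, Padic.valuation_mul x.ne_zero y.ne_zero]
  push_cast
  ring

lemma F2_cont : Continuous (F2 p E) :=
  (continuous_algebraMap ℚ_[p] E).comp Lfun_continuous

lemma F2_hom : ∀ x y : ℚ_[p]ˣ, F2 p E (x * y) = F2 p E x + F2 p E y := by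
  intro x y
  rw [F2, Lfun_mul, map_add]
  rfl

lemma F1_pU : F1 p E (pU p) = 1 := by
  rw [F1]
  have : ((pU p : ℚ_[p]ˣ) : ℚ_[p]).valuation = 1 := Padic.valuation_p
  rw [this]
  simp

lemma F1_gU : F1 p E (gU p) = 0 := by
  rw [F1]
  have : ((gU p : ℚ_[p]ˣ) : ℚ_[p]).valuation = 0 :=
    val_eq_zero_of_norm_one (gU p).ne_zero (g_norm_one p)
  rw [this]
  simp

lemma F2_pU : F2 p E (pU p) = 0 := by
  rw [F2, Lfun_pU, map_zero]

lemma F2_gU : F2 p E (gU p) ≠ 0 := by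
  rw [F2]
  intro h
  exact Lfun_gU_ne ((algebraMap ℚ_[p] E).injective (h.trans (map_zero _).symm))

end Efield

end Stmt13

/-- The `E`-vector space of continuous homomorphisms `ℚ_p^× → (E, +)`. -/
def contAddHomSpace (p : ℕ) [Fact p.Prime] (E : Type)
    [NontriviallyNormedField E] [NormedAlgebra ℚ_[p] E] :
    Submodule E (ℚ_[p]ˣ → E) where
  carrier := {f | Continuous f ∧ ∀ x y, f (x * y) = f x + f y}
  zero_mem' := ⟨continuous_const, by simp⟩
  add_mem' {f g} hf hg := ⟨hf.1.add hg.1, fun x y => by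
    simp only [Pi.add_apply, hf.2 x y, hg.2 x y]; ring⟩
  smul_mem' r f hf := ⟨hf.1.const_smul r, fun x y => by
    simp only [Pi.smul_apply, hf.2 x y, smul_eq_mul]; ring⟩

open Stmt13

theorem finrank_contAddHomSpace_eq_two (p : ℕ) [Fact p.Prime] (E : Type)
    [NontriviallyNormedField E] [NormedAlgebra ℚ_[p] E] [FiniteDimensional ℚ_[p] E] :
    Module.finrank E (contAddHomSpace p E) = 2 := by
  classical
  have hF1mem : F1 p E ∈ contAddHomSpace p E := ⟨F1_cont p E, F1_hom p E⟩
  have hF2mem : F2 p E ∈ contAddHomSpace p E := ⟨F2_cont p E, F2_hom p E⟩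
  let Φ : contAddHomSpace p E →ₗ[E] E × E :=
    { toFun := fun f => (f.1 (pU p), f.1 (gU p))
      map_add' := fun f g => rfl
      map_smul' := fun r f => rfl }
  have hinj : Function.Injective Φ := by
    rw [← LinearMap.ker_eq_bot, LinearMap.ker_eq_bot']
    intro f hf0
    have h1 : f.1 (pU p) = 0 := congrArg Prod.fst hf0
    have h2 : f.1 (gU p) = 0 := congrArg Prod.snd hf0
    have hmem : Continuous f.1 ∧ ∀ x y, f.1 (x * y) = f.1 x + f.1 y := f.2
    have := vanish hmem.1 hmem.2 h1 h2
    exact Subtype.ext this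
  have hsurj : Function.Surjective Φ := by
    rintro ⟨x, y⟩
    have hc : F2 p E (gU p) ≠ 0 := F2_gU p E
    set F : contAddHomSpace p E := x • (⟨F1 p E, hF1mem⟩ : contAddHomSpace p E)
      + (y / F2 p E (gU p)) • (⟨F2 p E, hF2mem⟩ : contAddHomSpace p E) with hF
    refine ⟨F, ?_⟩
    have hval : ∀ u : ℚ_[p]ˣ, (F : ℚ_[p]ˣ → E) u
        = x * F1 p E u + (y / F2 p E (gU p)) * F2 p E u := fun u => rfl
    have hΦ : Φ F = ((F : ℚ_[p]ˣ → E) (pU p), (F : ℚ_[p]ˣ → E) (gU p)) := rfl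
    rw [hΦ, hval, hval, F1_pU, F2_pU, F1_gU]
    rw [mul_one, mul_zero, add_zero, mul_zero, zero_add, div_mul_cancel₀ _ hc]
  have e : contAddHomSpace p E ≃ₗ[E] E × E := LinearEquiv.ofBijective Φ ⟨hinj, hsurj⟩
  rw [e.finrank_eq, Module.finrank_prod, Module.finrank_self]
end
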